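/- Let u : ℝ^d → ℝ^d be affine, u(x) = A x + b with A a linear map on ℝ^d and b ∈ ℝ^d. Then for every x ∈ ℝ^d the nonlocal dilatation equals θu(x) = (2/d) · tr(A); in particular the dilatation of an affine displacement field is constant and, for d = 2, equals the divergence of u. -/

import Mathlib

open MeasureTheory
open scoped RealInnerProductSpace

/-- The nonlocal dilatation of an affine displacement field `u(x) = A x + b` equals
`(2/d) · tr(A)` at every point. -/
theorem dilatation_of_affine
    (d : ℕ) (hd : 1 ≤ d) (δ : ℝ) (hδ : 0 < δ)
    (γ : ℝ → ℝ) (hγ_meas : Measurable γ) (hγ_nonneg : ∀ r, 0 ≤ γ r)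
    (hγ_supp : ∀ r, δ ≤ r → γ r = 0)
    (hγ_int : Integrable (fun h : EuclideanSpace ℝ (Fin d) => γ ‖h‖))
    (m : ℝ) (hm : 0 < m)
    (hm_def : (∫ h : EuclideanSpace ℝ (Fin d), γ ‖h‖ * ‖h‖ ^ 2) = m)
    (A : EuclideanSpace ℝ (Fin d) →ₗ[ℝ] EuclideanSpace ℝ (Fin d))
    (b : EuclideanSpace ℝ (Fin d))
    (u : EuclideanSpace ℝ (Fin d) → EuclideanSpace ℝ (Fin d))
    (hu : ∀ x, u x = A x + b)
    (x : EuclideanSpace ℝ (Fin d)) :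
    (2 / m) * (∫ y, γ ‖y - x‖ * ⟪y - x, u y - u x⟫) =
      (2 / d) * LinearMap.trace ℝ (EuclideanSpace ℝ (Fin d)) A := by
  classical
  have hd0 : (d : ℝ) ≠ 0 := by
    have : 0 < d := lt_of_lt_of_le Nat.zero_lt_one hd
    exact_mod_cast this.ne'
  have hm0 : m ≠ 0 := ne_of_gt hm
  -- coordinates are bounded by the norm
  have hcoord_abs : ∀ (h : EuclideanSpace ℝ (Fin d)) (i : Fin d), |h i| ≤ ‖h‖ := by
    intro h i
    rw [EuclideanSpace.norm_eq, ← Real.sqrt_sq_eq_abs]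
    apply Real.sqrt_le_sqrt
    have := Finset.single_le_sum (f := fun k => ‖h k‖ ^ 2)
      (fun k _ => sq_nonneg _) (Finset.mem_univ i)
    simpa using this
  -- integrability of the second moments
  have hbound : ∀ (i j : Fin d) (h : EuclideanSpace ℝ (Fin d)),
      ‖γ ‖h‖ * (h i * h j)‖ ≤ δ ^ 2 * γ ‖h‖ := by
    intro i j h
    by_cases hδh : δ ≤ ‖h‖
    · simp [hγ_supp _ hδh]
    · push_neg at hδh
      rw [Real.norm_eq_abs, abs_mul, abs_mul, abs_of_nonneg (hγ_nonneg _)]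
      have hi : |h i| ≤ δ := le_of_lt (lt_of_le_of_lt (hcoord_abs h i) hδh)
      have hj : |h j| ≤ δ := le_of_lt (lt_of_le_of_lt (hcoord_abs h j) hδh)
      calc γ ‖h‖ * (|h i| * |h j|) ≤ γ ‖h‖ * (δ * δ) := by
            refine mul_le_mul_of_nonneg_left ?_ (hγ_nonneg _)
            exact mul_le_mul hi hj (abs_nonneg _) (le_of_lt hδ)
        _ = δ ^ 2 * γ ‖h‖ := by ring
  have hInt : ∀ i j : Fin d,
      Integrable (fun h : EuclideanSpace ℝ (Fin d) => γ ‖h‖ * (h i * h j)) := by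
    intro i j
    refine (hγ_int.const_mul (δ ^ 2)).mono' ?_ (Filter.Eventually.of_forall (hbound i j))
    exact ((hγ_meas.comp measurable_norm).mul
      ((EuclideanSpace.proj i).continuous.measurable.mul (EuclideanSpace.proj j).continuous.measurable)).aestronglyMeasurable
  set I : Fin d → Fin d → ℝ :=
    fun i j => ∫ h : EuclideanSpace ℝ (Fin d), γ ‖h‖ * (h i * h j) with hI
  -- change of variables by linear isometries
  have hcomp : ∀ (e : EuclideanSpace ℝ (Fin d) ≃ₗᵢ[ℝ] EuclideanSpace ℝ (Fin d))
      (f : EuclideanSpace ℝ (Fin d) → ℝ), (∫ h, f (e h)) = ∫ h, f h := fun e f =>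
    e.measurePreserving.integral_comp e.toHomeomorph.measurableEmbedding f
  -- off-diagonal moments vanish
  have hoff : ∀ i j : Fin d, i ≠ j → I i j = 0 := by
    intro i j hij
    set e := LinearIsometryEquiv.piLpCongrRight 2
      (fun k : Fin d => if k = i then LinearIsometryEquiv.neg ℝ
        else LinearIsometryEquiv.refl ℝ ℝ) with he
    have happ : ∀ (h : EuclideanSpace ℝ (Fin d)) (k : Fin d),
        e h k = if k = i then -h k else h k := by
      intro h k
      rw [he, LinearIsometryEquiv.piLpCongrRight_apply]
      by_cases hk : k = i
      · subst hk; simp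
      · simp [hk]
    have hneg : I i j = -I i j := by
      conv_lhs => rw [hI]
      calc (∫ h : EuclideanSpace ℝ (Fin d), γ ‖h‖ * (h i * h j))
          = ∫ h : EuclideanSpace ℝ (Fin d), γ ‖e h‖ * (e h i * e h j) :=
            (hcomp e (fun h => γ ‖h‖ * (h i * h j))).symm
        _ = ∫ h : EuclideanSpace ℝ (Fin d), -(γ ‖h‖ * (h i * h j)) := by
            congr 1; funext h
            rw [e.norm_map, happ h i, happ h j, if_pos rfl, if_neg (Ne.symm hij)]
            ring
        _ = -I i j := by rw [integral_neg]
    linarith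
  -- all diagonal moments agree
  have hdiag : ∀ i j : Fin d, I i i = I j j := by
    intro i j
    set e := LinearIsometryEquiv.piLpCongrLeft 2 ℝ ℝ (Equiv.swap i j) with he
    have happ : ∀ (h : EuclideanSpace ℝ (Fin d)) (k : Fin d),
        e h k = h (Equiv.swap i j k) := by
      intro h k
      rw [he, LinearIsometryEquiv.piLpCongrLeft_apply]
      simp [Equiv.piCongrLeft'_apply]
    calc I i i = ∫ h : EuclideanSpace ℝ (Fin d), γ ‖h‖ * (h i * h i) := rfl
      _ = ∫ h : EuclideanSpace ℝ (Fin d), γ ‖e h‖ * (e h j * e h j) := by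
          congr 1; funext h
          rw [e.norm_map, happ h j, Equiv.swap_apply_right]
      _ = I j j := hcomp e (fun h => γ ‖h‖ * (h j * h j))
  -- sum of diagonal moments equals m
  have hsum : (∑ i : Fin d, I i i) = m := by
    rw [← hm_def, ← integral_finset_sum _ (fun i _ => hInt i i)]
    congr 1; funext h
    have hn : ‖h‖ ^ 2 = ∑ i, h i * h i := by
      rw [← real_inner_self_eq_norm_sq, PiLp.inner_apply]; rfl
    rw [hn, Finset.mul_sum]
  have hdiagval : ∀ i : Fin d, I i i = m / d := by
    intro i
    have hcard : (∑ j : Fin d, I j j) = d * I i i := by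
      rw [Finset.sum_congr rfl (fun j _ => hdiag j i)]
      simp [Finset.sum_const, Finset.card_univ, mul_comm]
    have : m = d * I i i := by rw [← hsum, hcard]
    field_simp [this]
    linarith
  -- coordinates of A
  have hAh : ∀ (h : EuclideanSpace ℝ (Fin d)) (i : Fin d),
      A h i = ∑ j, h j * A (EuclideanSpace.single j 1) i := by
    intro h i
    have hrepr : h = ∑ j, h j • EuclideanSpace.single j 1 := by
      have := (EuclideanSpace.basisFun (Fin d) ℝ).sum_repr h
      simpa [EuclideanSpace.basisFun_apply, EuclideanSpace.basisFun_repr] using this.symm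
    conv_lhs => rw [hrepr]
    rw [map_sum]
    rw [show ((∑ j, A (h j • EuclideanSpace.single j 1)) i)
        = ∑ j, (A (h j • EuclideanSpace.single j 1)) i from by rw [WithLp.ofLp_sum, Finset.sum_apply]]
    simp [_root_.map_smul, smul_eq_mul]
  -- the trace as a sum of diagonal matrix entries
  have htrace : LinearMap.trace ℝ (EuclideanSpace ℝ (Fin d)) A
      = ∑ i, A (EuclideanSpace.single i 1) i := by
    rw [LinearMap.trace_eq_matrix_trace ℝ (EuclideanSpace.basisFun (Fin d) ℝ).toBasis A,
      Matrix.trace]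
    simp [LinearMap.toMatrix_apply, EuclideanSpace.basisFun_apply, Matrix.diag]
  -- main computation
  have hmain : (∫ y, γ ‖y - x‖ * ⟪y - x, u y - u x⟫)
      = (m / d) * LinearMap.trace ℝ (EuclideanSpace ℝ (Fin d)) A := by
    have huu : ∀ y, u y - u x = A (y - x) := by
      intro y; rw [hu, hu, map_sub]; abel
    calc (∫ y, γ ‖y - x‖ * ⟪y - x, u y - u x⟫)
        = ∫ y, γ ‖y - x‖ * ⟪y - x, A (y - x)⟫ := by simp_rw [huu]
      _ = ∫ h : EuclideanSpace ℝ (Fin d), γ ‖h‖ * ⟪h, A h⟫ :=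
          integral_sub_right_eq_self (fun h => γ ‖h‖ * ⟪h, A h⟫) x
      _ = ∫ h : EuclideanSpace ℝ (Fin d),
            ∑ i, ∑ j, A (EuclideanSpace.single j 1) i * (γ ‖h‖ * (h i * h j)) := by
          congr 1; funext h
          have hin : ⟪h, A h⟫ = ∑ i, h i * A h i := by rw [PiLp.inner_apply]; simp only [Real.inner_apply]
          rw [hin, Finset.mul_sum]
          refine Finset.sum_congr rfl fun i _ => ?_
          rw [hAh h i, Finset.mul_sum, Finset.mul_sum]
          refine Finset.sum_congr rfl fun j _ => ?_
          ring
      _ = ∑ i, ∑ j, A (EuclideanSpace.single j 1) i * I i j := by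
          rw [integral_finset_sum _ (fun i _ =>
            integrable_finset_sum _ (fun j _ => (hInt i j).const_mul _))]
          refine Finset.sum_congr rfl fun i _ => ?_
          rw [integral_finset_sum _ (fun j _ => (hInt i j).const_mul _)]
          exact Finset.sum_congr rfl fun j _ => integral_const_mul _ _
      _ = ∑ i, A (EuclideanSpace.single i 1) i * (m / d) := by
          refine Finset.sum_congr rfl fun i _ => ?_
          rw [Finset.sum_eq_single i
            (fun j _ hj => by rw [hoff i j (fun h => hj h.symm), mul_zero])
            (fun h0 => absurd (Finset.mem_univ i) h0)]
          rw [hdiagval i]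
      _ = (m / d) * LinearMap.trace ℝ (EuclideanSpace ℝ (Fin d)) A := by
          rw [htrace, ← Finset.sum_mul, mul_comm]
  rw [hmain]
  field_simp
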